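/- Let V̂ : [0,T] × ℝⁿ × P₂(ℝⁿ) → ℝ be such that ∂_t V̂, δ_μV̂(t,x,μ;y), and ∂_t δ_μV̂(t,x,μ;y) exist and are jointly continuous, and for each K > 0 one has |δ_μV̂(t,x,μ;y)|, |∂_t δ_μV̂(t,x,μ;y)| ≤ C_K(1+|y|²) whenever |x| ≤ K and W₂(μ, δ₀) ≤ K. Then the flat derivative in μ of the function (t,x,μ) ↦ ∂_t V̂(t,x,μ) exists and δ_μ(∂_t V̂(t,x,μ))(y) = ∂_t δ_μ V̂(t,x,μ;y) for all (t,x,μ,y). -/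

import Mathlib

open MeasureTheory ENNReal Set

variable {n : ℕ}

/-- Membership in `P₂(ℝⁿ)`: Borel probability measures with finite second moment. -/
def MemP2 (μ : Measure (EuclideanSpace ℝ (Fin n))) : Prop :=
  IsProbabilityMeasure μ ∧ (∫⁻ y, (‖y‖₊ : ℝ≥0∞) ^ 2 ∂μ) < ⊤

/-- The convex combination `μ + s(ν − μ) = (1−s)μ + sν` of two measures. -/
noncomputable def mix (s : ℝ) (μ ν : Measure (EuclideanSpace ℝ (Fin n))) :
    Measure (EuclideanSpace ℝ (Fin n)) :=
  ENNReal.ofReal (1 - s) • μ + ENNReal.ofReal s • ν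

/-- The 2-Wasserstein distance, via couplings. -/
noncomputable def W2 (μ ν : Measure (EuclideanSpace ℝ (Fin n))) : ℝ≥0∞ :=
  (⨅ π : {π : Measure (EuclideanSpace ℝ (Fin n) × EuclideanSpace ℝ (Fin n)) //
        π.map Prod.fst = μ ∧ π.map Prod.snd = ν},
      ∫⁻ p, ENNReal.ofReal (dist p.1 p.2 ^ 2) ∂π.1) ^ (1 / 2 : ℝ)

open Filter Topology intervalIntegral

set_option maxHeartbeats 1000000
local notation "E" => EuclideanSpace ℝ (Fin n)

/-- second moment -/
noncomputable def sm (ρ : Measure (EuclideanSpace ℝ (Fin n))) : ℝ≥0∞ :=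
  ∫⁻ y, (‖y‖₊ : ℝ≥0∞) ^ 2 ∂ρ

theorem ofReal_normsq (y : EuclideanSpace ℝ (Fin n)) :
    ENNReal.ofReal (‖y‖ ^ 2) = (‖y‖₊ : ℝ≥0∞) ^ 2 := by
  rw [ENNReal.ofReal_pow (norm_nonneg y), ofReal_norm, enorm_eq_nnnorm]

theorem mix_zero (μ ν : Measure (EuclideanSpace ℝ (Fin n))) : mix 0 μ ν = μ := by
  simp [mix]

theorem mix_one (μ ν : Measure (EuclideanSpace ℝ (Fin n))) : mix 1 μ ν = ν := by
  simp [mix]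

theorem mix_comm (s : ℝ) (μ ν : Measure (EuclideanSpace ℝ (Fin n))) :
    mix s μ ν = mix (1 - s) ν μ := by
  simp [mix, sub_sub_cancel, add_comm]

theorem lintegral_mix (s : ℝ) (μ ν : Measure (EuclideanSpace ℝ (Fin n)))
    (f : EuclideanSpace ℝ (Fin n) → ℝ≥0∞) :
    ∫⁻ y, f y ∂(mix s μ ν)
      = ENNReal.ofReal (1 - s) * ∫⁻ y, f y ∂μ + ENNReal.ofReal s * ∫⁻ y, f y ∂ν := by
  simp [mix, lintegral_add_measure, lintegral_smul_measure]

theorem mix_prob {μ ν : Measure (EuclideanSpace ℝ (Fin n))}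
    (hμ : IsProbabilityMeasure μ) (hν : IsProbabilityMeasure ν)
    {s : ℝ} (hs : s ∈ Icc (0:ℝ) 1) : IsProbabilityMeasure (mix s μ ν) := by
  constructor
  simp only [mix, Measure.add_apply, Measure.smul_apply, smul_eq_mul,
    measure_univ, mul_one]
  rw [← ENNReal.ofReal_add (by linarith [hs.2]) hs.1]
  norm_num

theorem sm_mix_le {μ ν : Measure (EuclideanSpace ℝ (Fin n))}
    {s : ℝ} (hs : s ∈ Icc (0:ℝ) 1) : sm (mix s μ ν) ≤ sm μ + sm ν := by
  rw [sm, lintegral_mix]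
  gcongr
  · calc ENNReal.ofReal (1 - s) * sm μ ≤ 1 * sm μ := by
          gcongr
          exact ENNReal.ofReal_le_one.2 (by linarith [hs.1])
      _ = sm μ := one_mul _
  · calc ENNReal.ofReal s * sm ν ≤ 1 * sm ν := by
          gcongr
          exact ENNReal.ofReal_le_one.2 hs.2
      _ = sm ν := one_mul _

theorem mix_memP2 {μ ν : Measure (EuclideanSpace ℝ (Fin n))}
    (hμ : MemP2 μ) (hν : MemP2 ν) {s : ℝ} (hs : s ∈ Icc (0:ℝ) 1) :
    MemP2 (mix s μ ν) := by
  refine ⟨mix_prob hμ.1 hν.1 hs, ?_⟩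
  calc (∫⁻ y, (‖y‖₊ : ℝ≥0∞) ^ 2 ∂(mix s μ ν)) = sm (mix s μ ν) := rfl
    _ ≤ sm μ + sm ν := sm_mix_le hs
    _ < ⊤ := ENNReal.add_lt_top.2 ⟨hμ.2, hν.2⟩

theorem W2_le_coupling {μ ν : Measure (EuclideanSpace ℝ (Fin n))}
    (π : Measure (EuclideanSpace ℝ (Fin n) × EuclideanSpace ℝ (Fin n)))
    (hfst : π.map Prod.fst = μ) (hsnd : π.map Prod.snd = ν) :
    W2 μ ν ≤ (∫⁻ p, ENNReal.ofReal (dist p.1 p.2 ^ 2) ∂π) ^ (1 / 2 : ℝ) := by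
  apply ENNReal.rpow_le_rpow _ (by norm_num)
  exact iInf_le (fun π : {π : Measure (EuclideanSpace ℝ (Fin n) × EuclideanSpace ℝ (Fin n)) //
        π.map Prod.fst = μ ∧ π.map Prod.snd = ν} =>
      ∫⁻ p, ENNReal.ofReal (dist p.1 p.2 ^ 2) ∂π.1) ⟨π, hfst, hsnd⟩

theorem W2_self (ρ : Measure (EuclideanSpace ℝ (Fin n))) : W2 ρ ρ = 0 := by
  have hmeas : Measurable (fun y : EuclideanSpace ℝ (Fin n) => (y, y)) :=
    measurable_id.prodMk measurable_id
  have hfst : (ρ.map (fun y : EuclideanSpace ℝ (Fin n) => (y, y))).map Prod.fst = ρ := by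
    rw [Measure.map_map measurable_fst hmeas]; exact Measure.map_id
  have hsnd : (ρ.map (fun y : EuclideanSpace ℝ (Fin n) => (y, y))).map Prod.snd = ρ := by
    rw [Measure.map_map measurable_snd hmeas]; exact Measure.map_id
  have h := W2_le_coupling (ρ.map (fun y => (y, y))) hfst hsnd
  rw [lintegral_map _ hmeas] at h
  · simp only [dist_self] at h
    simp only [ne_eq, OfNat.ofNat_ne_zero, not_false_eq_true, zero_pow,
      ENNReal.ofReal_zero, lintegral_zero] at h
    rw [ENNReal.zero_rpow_of_pos (by norm_num)] at h
    exact le_antisymm h zero_le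
  · exact (measurable_ofReal.comp ((measurable_dist.comp
      (measurable_fst.prodMk measurable_snd)).pow_const 2))

theorem W2_dirac_le {ρ : Measure (EuclideanSpace ℝ (Fin n))} (hρ : IsProbabilityMeasure ρ) :
    W2 ρ (Measure.dirac 0) ≤ (sm ρ) ^ (1 / 2 : ℝ) := by
  have hmeas : Measurable (fun y : EuclideanSpace ℝ (Fin n) => (y, (0 : EuclideanSpace ℝ (Fin n)))) :=
    measurable_id.prodMk measurable_const
  have hfst : (ρ.map (fun y : EuclideanSpace ℝ (Fin n) => (y, (0:EuclideanSpace ℝ (Fin n))))).map Prod.fst = ρ := by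
    rw [Measure.map_map measurable_fst hmeas]; exact Measure.map_id
  have hsnd : (ρ.map (fun y : EuclideanSpace ℝ (Fin n) => (y, (0:EuclideanSpace ℝ (Fin n))))).map Prod.snd
      = Measure.dirac 0 := by
    rw [Measure.map_map measurable_snd hmeas]
    show ρ.map (fun _ => (0:EuclideanSpace ℝ (Fin n))) = _
    rw [Measure.map_const, measure_univ, one_smul]
  have h := W2_le_coupling (ρ.map (fun y => (y, 0))) hfst hsnd
  refine le_trans h ?_
  rw [lintegral_map _ hmeas]
  · simp only [dist_zero_right]
    apply ENNReal.rpow_le_rpow _ (by norm_num)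
    apply le_of_eq
    exact lintegral_congr fun y => ofReal_normsq y
  · exact (measurable_ofReal.comp ((measurable_dist.comp
      (measurable_fst.prodMk measurable_snd)).pow_const 2))

theorem sq_rpow_half (x : ℝ≥0∞) : (x ^ (2:ℕ)) ^ (1/2 : ℝ) = x := by
  rw [← ENNReal.rpow_natCast x 2, ← ENNReal.rpow_mul]
  norm_num

theorem cost_le_prod {μ ν : Measure (EuclideanSpace ℝ (Fin n))}
    (hμ : IsProbabilityMeasure μ) (hν : IsProbabilityMeasure ν) :
    (∫⁻ p : EuclideanSpace ℝ (Fin n) × EuclideanSpace ℝ (Fin n),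
        ENNReal.ofReal (dist p.1 p.2 ^ 2) ∂(μ.prod ν)) ≤ 2 * (sm μ + sm ν) := by
  have hpt : ∀ p : EuclideanSpace ℝ (Fin n) × EuclideanSpace ℝ (Fin n),
      ENNReal.ofReal (dist p.1 p.2 ^ 2)
        ≤ 2 * ((‖p.1‖₊ : ℝ≥0∞) ^ 2 + (‖p.2‖₊ : ℝ≥0∞) ^ 2) := by
    intro p
    have h1 : dist p.1 p.2 ^ 2 ≤ 2 * (‖p.1‖ ^ 2 + ‖p.2‖ ^ 2) := by
      have h0 := dist_le_norm_add_norm p.1 p.2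
      have h2 : dist p.1 p.2 ^ 2 ≤ (‖p.1‖ + ‖p.2‖) ^ 2 :=
        pow_le_pow_left₀ dist_nonneg h0 2
      nlinarith [sq_nonneg (‖p.1‖ - ‖p.2‖)]
    calc ENNReal.ofReal (dist p.1 p.2 ^ 2)
        ≤ ENNReal.ofReal (2 * (‖p.1‖ ^ 2 + ‖p.2‖ ^ 2)) := ENNReal.ofReal_le_ofReal h1
      _ = 2 * ((‖p.1‖₊ : ℝ≥0∞) ^ 2 + (‖p.2‖₊ : ℝ≥0∞) ^ 2) := by
          rw [ENNReal.ofReal_mul (by norm_num),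
            ENNReal.ofReal_add (sq_nonneg _) (sq_nonneg _), ofReal_normsq, ofReal_normsq]
          norm_num
  calc (∫⁻ p, ENNReal.ofReal (dist p.1 p.2 ^ 2) ∂(μ.prod ν))
      ≤ ∫⁻ p : EuclideanSpace ℝ (Fin n) × EuclideanSpace ℝ (Fin n),
          2 * ((‖p.1‖₊ : ℝ≥0∞) ^ 2 + (‖p.2‖₊ : ℝ≥0∞) ^ 2) ∂(μ.prod ν) :=
        lintegral_mono hpt
    _ = 2 * ((∫⁻ p : EuclideanSpace ℝ (Fin n) × EuclideanSpace ℝ (Fin n),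
          (‖p.1‖₊ : ℝ≥0∞) ^ 2 ∂(μ.prod ν))
        + ∫⁻ p : EuclideanSpace ℝ (Fin n) × EuclideanSpace ℝ (Fin n),
          (‖p.2‖₊ : ℝ≥0∞) ^ 2 ∂(μ.prod ν)) := by
        have m1 : Measurable (fun p : EuclideanSpace ℝ (Fin n) × EuclideanSpace ℝ (Fin n) =>
            (‖p.1‖₊ : ℝ≥0∞) ^ 2) :=
          (measurable_nnnorm.comp measurable_fst).coe_nnreal_ennreal.pow_const 2
        have m2 : Measurable (fun p : EuclideanSpace ℝ (Fin n) × EuclideanSpace ℝ (Fin n) =>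
            (‖p.2‖₊ : ℝ≥0∞) ^ 2) :=
          (measurable_nnnorm.comp measurable_snd).coe_nnreal_ennreal.pow_const 2
        rw [lintegral_const_mul' _ _ (by norm_num), lintegral_add_left m1]
    _ = 2 * (sm μ + sm ν) := by
        congr 1
        have h1 : (∫⁻ p : EuclideanSpace ℝ (Fin n) × EuclideanSpace ℝ (Fin n),
            (‖p.1‖₊ : ℝ≥0∞) ^ 2 ∂(μ.prod ν))
            = ∫⁻ x, (‖x‖₊ : ℝ≥0∞) ^ 2 ∂((μ.prod ν).map Prod.fst) :=
          (lintegral_map (measurable_nnnorm.coe_nnreal_ennreal.pow_const 2) measurable_fst).symm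
        have h2 : (∫⁻ p : EuclideanSpace ℝ (Fin n) × EuclideanSpace ℝ (Fin n),
            (‖p.2‖₊ : ℝ≥0∞) ^ 2 ∂(μ.prod ν))
            = ∫⁻ x, (‖x‖₊ : ℝ≥0∞) ^ 2 ∂((μ.prod ν).map Prod.snd) :=
          (lintegral_map (measurable_nnnorm.coe_nnreal_ennreal.pow_const 2) measurable_snd).symm
        rw [h1, h2, Measure.map_fst_prod, Measure.map_snd_prod, measure_univ, measure_univ,
          one_smul, one_smul]
        rfl

theorem W2_mix_le_of_le {μ ν : Measure (EuclideanSpace ℝ (Fin n))}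
    (hμ : IsProbabilityMeasure μ) (hν : IsProbabilityMeasure ν) {a b : ℝ}
    (ha : 0 ≤ a) (hb : b ≤ 1) (hab : a ≤ b) :
    W2 (mix a μ ν) (mix b μ ν)
      ≤ (ENNReal.ofReal (b - a) * (2 * (sm μ + sm ν))) ^ (1/2 : ℝ) := by
  classical
  set Δ : EuclideanSpace ℝ (Fin n) → EuclideanSpace ℝ (Fin n) × EuclideanSpace ℝ (Fin n) :=
    fun y => (y, y) with hΔdef
  have hΔ : Measurable Δ := measurable_id.prodMk measurable_id
  set π : Measure (EuclideanSpace ℝ (Fin n) × EuclideanSpace ℝ (Fin n)) :=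
    ENNReal.ofReal (1 - b) • (μ.map Δ) + (ENNReal.ofReal a • (ν.map Δ)
      + ENNReal.ofReal (b - a) • (μ.prod ν)) with hπdef
  have hfst : π.map Prod.fst = mix a μ ν := by
    rw [hπdef, Measure.map_add _ _ measurable_fst, Measure.map_add _ _ measurable_fst,
      Measure.map_smul, Measure.map_smul, Measure.map_smul,
      Measure.map_map measurable_fst hΔ, Measure.map_map measurable_fst hΔ,
      Measure.map_fst_prod, measure_univ, one_smul]
    show ENNReal.ofReal (1-b) • μ.map id + (ENNReal.ofReal a • ν.map id + _) = _
    rw [Measure.map_id, Measure.map_id, mix, ← add_assoc, add_comm (ENNReal.ofReal (1-b) • μ),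
      add_assoc, add_comm (ENNReal.ofReal (1-b) • μ), ← add_smul,
      ← ENNReal.ofReal_add (by linarith) (by linarith)]
    ring_nf
    exact add_comm _ _
  have hsnd : π.map Prod.snd = mix b μ ν := by
    rw [hπdef, Measure.map_add _ _ measurable_snd, Measure.map_add _ _ measurable_snd,
      Measure.map_smul, Measure.map_smul, Measure.map_smul,
      Measure.map_map measurable_snd hΔ, Measure.map_map measurable_snd hΔ,
      Measure.map_snd_prod, measure_univ, one_smul]
    show ENNReal.ofReal (1-b) • μ.map id + (ENNReal.ofReal a • ν.map id
        + ENNReal.ofReal (b-a) • ν) = _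
    rw [Measure.map_id, Measure.map_id, mix, ← add_smul,
      ← ENNReal.ofReal_add ha (by linarith)]
    ring_nf
  refine le_trans (W2_le_coupling π hfst hsnd) ?_
  apply ENNReal.rpow_le_rpow _ (by norm_num)
  have hcostmeas : Measurable (fun p : EuclideanSpace ℝ (Fin n) × EuclideanSpace ℝ (Fin n) =>
      ENNReal.ofReal (dist p.1 p.2 ^ 2)) :=
    measurable_ofReal.comp ((measurable_dist.comp
      (measurable_fst.prodMk measurable_snd)).pow_const 2)
  have hdiag : ∀ ρ : Measure (EuclideanSpace ℝ (Fin n)),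
      (∫⁻ p, ENNReal.ofReal (dist p.1 p.2 ^ 2) ∂(ρ.map Δ)) = 0 := by
    intro ρ
    rw [lintegral_map hcostmeas hΔ]
    simp [hΔdef]
  rw [hπdef, lintegral_add_measure, lintegral_add_measure, lintegral_smul_measure,
    lintegral_smul_measure, lintegral_smul_measure, hdiag, hdiag]
  simp only [smul_eq_mul, mul_zero, zero_add]
  exact mul_le_mul_right (cost_le_prod hμ hν) _

theorem W2_mix_small {μ ν : Measure (EuclideanSpace ℝ (Fin n))}
    (hμ : MemP2 μ) (hν : MemP2 ν) {δ : ℝ} (hδ : 0 < δ) :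
    ∃ η > (0:ℝ), ∀ a ∈ Icc (0:ℝ) 1, ∀ b ∈ Icc (0:ℝ) 1, |a - b| < η →
      W2 (mix a μ ν) (mix b μ ν) < ENNReal.ofReal δ := by
  haveI := hμ.1; haveI := hν.1
  set c : ℝ≥0∞ := 2 * (sm μ + sm ν) with hc
  have hcfin : c ≠ ⊤ := by
    rw [hc]
    exact ENNReal.mul_ne_top (by norm_num)
      (ENNReal.add_ne_top.2 ⟨hμ.2.ne, hν.2.ne⟩)
  set cR : ℝ := c.toReal with hcR
  have hcR0 : 0 ≤ cR := ENNReal.toReal_nonneg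
  refine ⟨δ ^ 2 / (2 * (cR + 1)), by positivity, ?_⟩
  intro a ha b hb hab
  -- the key bound
  have hkey : W2 (mix a μ ν) (mix b μ ν) ≤ (ENNReal.ofReal |a - b| * c) ^ (1/2 : ℝ) := by
    rcases le_total a b with h | h
    · have := W2_mix_le_of_le hμ.1 hν.1 ha.1 hb.2 h
      rwa [show |a - b| = b - a by rw [abs_sub_comm]; exact abs_of_nonneg (by linarith)]
    · have h1a : (0:ℝ) ≤ 1 - b := by linarith [hb.2]
      have := W2_mix_le_of_le hν.1 hμ.1 (by linarith [ha.2] : (0:ℝ) ≤ 1 - a) (by linarith [hb.1] : 1 - b ≤ 1) (by linarith : 1 - a ≤ 1 - b)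
      rw [← mix_comm, ← mix_comm] at this
      rw [show |a - b| = (1 - b) - (1 - a) by rw [abs_of_nonneg (by linarith)]; ring]
      rw [hc, show (2 : ℝ≥0∞) * (sm μ + sm ν) = 2 * (sm ν + sm μ) by rw [add_comm]]
      exact this
  refine lt_of_le_of_lt hkey ?_
  have h1 : ENNReal.ofReal |a - b| * c ≤ ENNReal.ofReal (|a - b| * cR) := by
    rw [ENNReal.ofReal_mul (abs_nonneg _)]
    gcongr
    exact le_of_eq (ENNReal.ofReal_toReal hcfin).symm
  have h2 : |a - b| * cR < δ ^ 2 := by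
    calc |a - b| * cR ≤ |a - b| * (cR + 1) := by
          apply mul_le_mul_of_nonneg_left (by linarith) (abs_nonneg _)
      _ < (δ ^ 2 / (2 * (cR + 1))) * (cR + 1) := by
          apply mul_lt_mul_of_pos_right hab (by linarith)
      _ = δ ^ 2 / 2 := by field_simp
      _ < δ ^ 2 := by nlinarith
  calc (ENNReal.ofReal |a - b| * c) ^ (1/2 : ℝ)
      ≤ (ENNReal.ofReal (|a - b| * cR)) ^ (1/2 : ℝ) :=
        ENNReal.rpow_le_rpow h1 (by norm_num)
    _ < (ENNReal.ofReal (δ ^ 2)) ^ (1/2 : ℝ) :=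
        ENNReal.rpow_lt_rpow ((ENNReal.ofReal_lt_ofReal_iff (by positivity)).2 h2) (by norm_num)
    _ = ENNReal.ofReal δ := by
        rw [ENNReal.ofReal_pow hδ.le, sq_rpow_half]

theorem W2_mix_dirac_le {μ ν : Measure (EuclideanSpace ℝ (Fin n))}
    (hμ : MemP2 μ) (hν : MemP2 ν) {s : ℝ} (hs : s ∈ Icc (0:ℝ) 1) :
    W2 (mix s μ ν) (Measure.dirac 0) ≤ (sm μ + sm ν) ^ (1/2 : ℝ) :=
  le_trans (W2_dirac_le (mix_prob hμ.1 hν.1 hs))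
    (ENNReal.rpow_le_rpow (sm_mix_le hs) (by norm_num))

section Key

variable {T : ℝ}

theorem cont_slice_y {f : ℝ → EuclideanSpace ℝ (Fin n) → ℝ}
    (hcf : ContinuousOn (fun p : ℝ × EuclideanSpace ℝ (Fin n) => f p.1 p.2)
      (Icc 0 T ×ˢ univ)) {u : ℝ} (hu : u ∈ Icc (0:ℝ) T) :
    Continuous (fun y => f u y) := by
  rw [← continuousOn_univ]
  exact hcf.comp (Continuous.continuousOn (continuous_const.prodMk continuous_id))
    (fun y _ => ⟨hu, mem_univ _⟩)

theorem cont_slice_t {f : ℝ → EuclideanSpace ℝ (Fin n) → ℝ}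
    (hcf : ContinuousOn (fun p : ℝ × EuclideanSpace ℝ (Fin n) => f p.1 p.2)
      (Icc 0 T ×ˢ univ)) (y : EuclideanSpace ℝ (Fin n)) :
    ContinuousOn (fun u => f u y) (Icc (0:ℝ) T) :=
  hcf.comp (Continuous.continuousOn (continuous_id.prodMk continuous_const))
    (fun u hu => ⟨hu, mem_univ _⟩)

theorem integrable_of_quadbound {f : EuclideanSpace ℝ (Fin n) → ℝ}
    {ρ' : Measure (EuclideanSpace ℝ (Fin n))}
    (hint : Integrable (fun y : EuclideanSpace ℝ (Fin n) => 1 + ‖y‖ ^ 2) ρ')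
    (hmeas : AEStronglyMeasurable f ρ') {C : ℝ}
    (hC : ∀ y, |f y| ≤ C * (1 + ‖y‖ ^ 2)) : Integrable f ρ' := by
  refine Integrable.mono' (hint.const_mul C) hmeas ?_
  exact Filter.Eventually.of_forall fun y => by
    simpa [Real.norm_eq_abs] using hC y

theorem key (hT : 0 < T) (f : ℝ → EuclideanSpace ℝ (Fin n) → ℝ)
    (ρ' : Measure (EuclideanSpace ℝ (Fin n))) [IsProbabilityMeasure ρ']
    (hint : Integrable (fun y : EuclideanSpace ℝ (Fin n) => 1 + ‖y‖ ^ 2) ρ')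
    (hcf : ContinuousOn (fun p : ℝ × EuclideanSpace ℝ (Fin n) => f p.1 p.2)
      (Icc 0 T ×ˢ univ))
    (hcg : ContinuousOn (fun p : ℝ × EuclideanSpace ℝ (Fin n) =>
      derivWithin (fun u => f u p.2) (Icc 0 T) p.1) (Icc 0 T ×ˢ univ))
    (hdiff : ∀ r ∈ Icc (0:ℝ) T, ∀ y, DifferentiableWithinAt ℝ (fun u => f u y) (Icc 0 T) r)
    {C : ℝ}
    (hC : ∀ r ∈ Icc (0:ℝ) T, ∀ y, |f r y| ≤ C * (1 + ‖y‖ ^ 2)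
      ∧ |derivWithin (fun u => f u y) (Icc 0 T) r| ≤ C * (1 + ‖y‖ ^ 2))
    {t' : ℝ} (ht' : t' ∈ Icc (0:ℝ) T) :
    (∫ y, f t' y ∂ρ') - (∫ y, f 0 y ∂ρ')
      = ∫ r in (0:ℝ)..t', (∫ y, derivWithin (fun u => f u y) (Icc 0 T) r ∂ρ') := by
  set g : ℝ → EuclideanSpace ℝ (Fin n) → ℝ :=
    fun r y => derivWithin (fun u => f u y) (Icc 0 T) r with hg
  have h0T : (0:ℝ) ∈ Icc (0:ℝ) T := ⟨le_rfl, hT.le⟩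
  -- pointwise FTC
  have ptFTC : ∀ y, ∫ r in (0:ℝ)..t', g r y = f t' y - f 0 y := by
    intro y
    apply intervalIntegral.integral_eq_sub_of_hasDeriv_right_of_le ht'.1
    · exact (cont_slice_t hcf y).mono (Icc_subset_Icc le_rfl ht'.2)
    · intro r hr
      have hrIcc : r ∈ Icc (0:ℝ) T := ⟨hr.1.le, hr.2.le.trans ht'.2⟩
      have hnhds : Icc (0:ℝ) T ∈ 𝓝 r :=
        Icc_mem_nhds hr.1 (lt_of_lt_of_le hr.2 ht'.2)
      have hda : DifferentiableAt ℝ (fun u => f u y) r :=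
        (hdiff r hrIcc y).differentiableAt hnhds
      have : g r y = deriv (fun u => f u y) r := derivWithin_of_mem_nhds hnhds
      rw [this]
      exact hda.hasDerivAt.hasDerivWithinAt
    · exact ((cont_slice_t hcg y).mono
        (by rw [uIcc_of_le ht'.1]; exact Icc_subset_Icc le_rfl ht'.2)).intervalIntegrable
  -- integrability in y at fixed times
  have hIf : ∀ u ∈ Icc (0:ℝ) T, Integrable (fun y => f u y) ρ' := fun u hu =>
    integrable_of_quadbound hint (cont_slice_y hcf hu).aestronglyMeasurable
      (fun y => (hC u hu y).1)
  -- Fubini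
  have hmeasset : MeasurableSet ((univ : Set (EuclideanSpace ℝ (Fin n))) ×ˢ Ioc 0 t') :=
    MeasurableSet.univ.prod measurableSet_Ioc
  have hprodmeas : ρ'.prod (volume.restrict (Ioc 0 t'))
      = (ρ'.prod volume).restrict (univ ×ˢ Ioc 0 t') := by
    rw [← Measure.prod_restrict, Measure.restrict_univ]
  have hFcont : ContinuousOn (fun p : EuclideanSpace ℝ (Fin n) × ℝ => g p.2 p.1)
      (univ ×ˢ Icc 0 T) := by
    exact hcg.comp (Continuous.continuousOn continuous_swap)
      (fun p hp => ⟨hp.2, mem_univ _⟩)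
  have hIg : Integrable (Function.uncurry fun y r => g r y)
      (ρ'.prod (volume.restrict (Ioc 0 t'))) := by
    rw [hprodmeas]
    have hmeasF : AEStronglyMeasurable (fun p : EuclideanSpace ℝ (Fin n) × ℝ => g p.2 p.1)
        ((ρ'.prod volume).restrict (univ ×ˢ Ioc 0 t')) :=
      (hFcont.mono (prod_mono_right (Ioc_subset_Icc_self.trans
        (Icc_subset_Icc le_rfl ht'.2)))).aestronglyMeasurable hmeasset
    have hbdd : Integrable (fun p : EuclideanSpace ℝ (Fin n) × ℝ => C * (1 + ‖p.1‖ ^ 2) * 1)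
        ((ρ'.prod volume).restrict (univ ×ˢ Ioc 0 t')) := by
      rw [← hprodmeas]
      exact Integrable.mul_prod (hint.const_mul C) (integrable_const 1)
    refine Integrable.mono' hbdd hmeasF ?_
    refine (MeasureTheory.ae_restrict_mem hmeasset).mono ?_
    intro p hp
    have hrIcc : p.2 ∈ Icc (0:ℝ) T := Icc_subset_Icc le_rfl ht'.2 (Ioc_subset_Icc_self hp.2)
    simpa [Real.norm_eq_abs, Function.uncurry] using (hC p.2 hrIcc p.1).2
  have hswap := MeasureTheory.integral_integral_swap
    (μ := ρ') (ν := volume.restrict (Ioc 0 t')) (f := fun y r => g r y) hIg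
  calc (∫ y, f t' y ∂ρ') - (∫ y, f 0 y ∂ρ')
      = ∫ y, (f t' y - f 0 y) ∂ρ' := (integral_sub (hIf t' ht') (hIf 0 h0T)).symm
    _ = ∫ y, (∫ r in (0:ℝ)..t', g r y) ∂ρ' := by
        exact integral_congr_ae (Filter.Eventually.of_forall fun y => (ptFTC y).symm)
    _ = ∫ y, (∫ r in Ioc (0:ℝ) t', g r y) ∂ρ' := by
        refine integral_congr_ae (Filter.Eventually.of_forall fun y => ?_)
        show (∫ r in (0:ℝ)..t', g r y) = _
        rw [intervalIntegral.integral_of_le ht'.1]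
    _ = ∫ r in Ioc (0:ℝ) t', ∫ y, g r y ∂ρ' := hswap
    _ = ∫ r in (0:ℝ)..t', (∫ y, g r y ∂ρ') := (intervalIntegral.integral_of_le ht'.1).symm

theorem contG (hT : 0 < T) (g : ℝ → EuclideanSpace ℝ (Fin n) → ℝ)
    (ρ' : Measure (EuclideanSpace ℝ (Fin n))) [IsProbabilityMeasure ρ']
    (hint : Integrable (fun y : EuclideanSpace ℝ (Fin n) => 1 + ‖y‖ ^ 2) ρ')
    (hcg : ContinuousOn (fun p : ℝ × EuclideanSpace ℝ (Fin n) => g p.1 p.2)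
      (Icc 0 T ×ˢ univ))
    {C : ℝ} (hC : ∀ r ∈ Icc (0:ℝ) T, ∀ y, |g r y| ≤ C * (1 + ‖y‖ ^ 2)) :
    ContinuousOn (fun r => ∫ y, g r y ∂ρ') (Icc (0:ℝ) T) := by
  intro r hr
  apply continuousWithinAt_of_dominated (bound := fun y => C * (1 + ‖y‖ ^ 2))
  · filter_upwards [eventually_mem_nhdsWithin] with r' hr'
    exact (cont_slice_y hcg hr').aestronglyMeasurable
  · filter_upwards [eventually_mem_nhdsWithin] with r' hr'
    exact Filter.Eventually.of_forall fun y => by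
      simpa [Real.norm_eq_abs] using hC r' hr' y
  · exact hint.const_mul C
  · exact Filter.Eventually.of_forall fun y => (cont_slice_t hcg y) r hr

end Key

section ContConv

variable {T : ℝ}
variable {F : ℝ → EuclideanSpace ℝ (Fin n) → Measure (EuclideanSpace ℝ (Fin n)) →
    EuclideanSpace ℝ (Fin n) → ℝ}

theorem contA
    (hF : ∀ t ∈ Icc (0:ℝ) T, ∀ x, ∀ μ, MemP2 μ → ∀ y, ∀ ε > (0:ℝ),
      ∃ δ > (0:ℝ), ∀ t' ∈ Icc (0:ℝ) T, ∀ x', ∀ ν, MemP2 ν → ∀ y',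
        |t' - t| < δ → dist x x' < δ → W2 μ ν < ENNReal.ofReal δ → dist y y' < δ →
        |F t' x' ν y' - F t x μ y| < ε)
    (x : EuclideanSpace ℝ (Fin n)) {ρ : Measure (EuclideanSpace ℝ (Fin n))}
    (hρ : MemP2 ρ) :
    ContinuousOn (fun p : ℝ × EuclideanSpace ℝ (Fin n) => F p.1 x ρ p.2)
      (Icc 0 T ×ˢ univ) := by
  intro p hp
  rw [Metric.continuousWithinAt_iff]
  intro ε hε
  obtain ⟨δ, hδ, h⟩ := hF p.1 hp.1 x ρ hρ p.2 ε hε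
  refine ⟨δ, hδ, ?_⟩
  intro q hq hdq
  rw [Prod.dist_eq, max_lt_iff] at hdq
  rw [Real.dist_eq]
  exact h q.1 hq.1 x ρ hρ q.2 (by rw [← Real.dist_eq]; exact hdq.1)
    (by rw [dist_self]; exact hδ)
    (by rw [W2_self]; exact ENNReal.ofReal_pos.2 hδ)
    (by rw [dist_comm]; exact hdq.2)

theorem contMix
    (hF : ∀ t ∈ Icc (0:ℝ) T, ∀ x, ∀ μ, MemP2 μ → ∀ y, ∀ ε > (0:ℝ),
      ∃ δ > (0:ℝ), ∀ t' ∈ Icc (0:ℝ) T, ∀ x', ∀ ν, MemP2 ν → ∀ y',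
        |t' - t| < δ → dist x x' < δ → W2 μ ν < ENNReal.ofReal δ → dist y y' < δ →
        |F t' x' ν y' - F t x μ y| < ε)
    (x : EuclideanSpace ℝ (Fin n)) {μ ν : Measure (EuclideanSpace ℝ (Fin n))}
    (hμ : MemP2 μ) (hν : MemP2 ν) (y : EuclideanSpace ℝ (Fin n)) :
    ContinuousOn (fun p : ℝ × ℝ => F p.1 x (mix p.2 μ ν) y)
      (Icc 0 T ×ˢ Icc 0 1) := by
  intro p hp
  rw [Metric.continuousWithinAt_iff]
  intro ε hε
  obtain ⟨δ, hδ, h⟩ := hF p.1 hp.1 x (mix p.2 μ ν) (mix_memP2 hμ hν hp.2) y ε hε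
  obtain ⟨η, hη, hW⟩ := W2_mix_small hμ hν hδ
  refine ⟨min δ η, lt_min hδ hη, ?_⟩
  intro q hq hdq
  rw [Prod.dist_eq, max_lt_iff] at hdq
  rw [Real.dist_eq]
  refine h q.1 hq.1 x (mix q.2 μ ν) (mix_memP2 hμ hν hq.2) y
    (lt_of_lt_of_le (by rw [← Real.dist_eq]; exact hdq.1) (min_le_left _ _))
    (by rw [dist_self]; exact hδ) ?_ (by rw [dist_self]; exact hδ)
  exact hW p.2 hp.2 q.2 hq.2
    (by rw [← Real.dist_eq]; exact lt_of_lt_of_le (dist_comm p.2 q.2 ▸ hdq.2) (min_le_right _ _))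

end ContConv

theorem contJoint {T : ℝ}
    {F : ℝ → EuclideanSpace ℝ (Fin n) → Measure (EuclideanSpace ℝ (Fin n)) →
      EuclideanSpace ℝ (Fin n) → ℝ}
    (hF : ∀ t ∈ Icc (0:ℝ) T, ∀ x, ∀ μ, MemP2 μ → ∀ y, ∀ ε > (0:ℝ),
      ∃ δ > (0:ℝ), ∀ t' ∈ Icc (0:ℝ) T, ∀ x', ∀ ν, MemP2 ν → ∀ y',
        |t' - t| < δ → dist x x' < δ → W2 μ ν < ENNReal.ofReal δ → dist y y' < δ →
        |F t' x' ν y' - F t x μ y| < ε)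
    {μ ν : Measure (EuclideanSpace ℝ (Fin n))} (hμ : MemP2 μ) (hν : MemP2 ν)
    (x : EuclideanSpace ℝ (Fin n)) {C : ℝ}
    (hb : ∀ r ∈ Icc (0:ℝ) T, ∀ s ∈ Icc (0:ℝ) 1, ∀ y,
      |F r x (mix s μ ν) y| ≤ C * (1 + ‖y‖ ^ 2))
    (ρ' : Measure (EuclideanSpace ℝ (Fin n)))
    (hint' : Integrable (fun y : EuclideanSpace ℝ (Fin n) => 1 + ‖y‖ ^ 2) ρ') :
    ContinuousOn (fun p : ℝ × ℝ => ∫ y, F p.1 x (mix p.2 μ ν) y ∂ρ')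
      (Icc 0 T ×ˢ Icc 0 1) := by
  intro p hp
  apply continuousWithinAt_of_dominated (bound := fun y => C * (1 + ‖y‖ ^ 2))
  · filter_upwards [eventually_mem_nhdsWithin] with q hq
    exact (cont_slice_y (f := fun u y => F u x (mix q.2 μ ν) y)
      (contA hF x (mix_memP2 hμ hν hq.2)) hq.1).aestronglyMeasurable
  · filter_upwards [eventually_mem_nhdsWithin] with q hq
    exact Filter.Eventually.of_forall fun y => by
      simpa [Real.norm_eq_abs] using hb q.1 hq.1 q.2 hq.2 y
  · exact hint'.const_mul C
  · exact Filter.Eventually.of_forall fun y => contMix hF x hμ hν y p hp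

theorem ftc_Icc {T : ℝ} (hT : 0 < T) {G : ℝ → ℝ} (hG : ContinuousOn G (Icc 0 T))
    {t : ℝ} (ht : t ∈ Icc 0 T) :
    HasDerivWithinAt (fun u => ∫ r in (0:ℝ)..u, G r) (G t) (Icc 0 T) t := by
  haveI : Fact (t ∈ Icc (0:ℝ) T) := ⟨ht⟩
  have hint : IntervalIntegrable G volume 0 t := by
    apply (hG.mono _).intervalIntegrable
    rw [uIcc_of_le ht.1]
    exact Icc_subset_Icc le_rfl ht.2
  exact intervalIntegral.integral_hasDerivWithinAt_right hint
    ⟨Icc 0 T, self_mem_nhdsWithin, hG.aestronglyMeasurable measurableSet_Icc⟩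
    (hG t ht)

theorem memP2_integrable {ρ : Measure (EuclideanSpace ℝ (Fin n))} (h : MemP2 ρ) :
    Integrable (fun y : EuclideanSpace ℝ (Fin n) => 1 + ‖y‖ ^ 2) ρ := by
  haveI := h.1
  refine Integrable.add (integrable_const 1) ?_
  constructor
  · exact (continuous_norm.pow 2).aestronglyMeasurable
  · rw [HasFiniteIntegral]
    calc ∫⁻ y, ‖‖y‖ ^ 2‖₊ ∂ρ = ∫⁻ y, (‖y‖₊ : ℝ≥0∞) ^ 2 ∂ρ := by
          apply lintegral_congr; intro y
          norm_cast
          ext : 1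
          simp [Real.nnnorm_of_nonneg (sq_nonneg ‖y‖), NNReal.coe_pow]
      _ < ⊤ := h.2


noncomputable def Gfun (DV : ℝ → EuclideanSpace ℝ (Fin n) → Measure (EuclideanSpace ℝ (Fin n)) →
      EuclideanSpace ℝ (Fin n) → ℝ) (T : ℝ) (x : EuclideanSpace ℝ (Fin n))
    (μ ν ρ' : Measure (EuclideanSpace ℝ (Fin n))) (r s : ℝ) : ℝ :=
  ∫ y, derivWithin (fun t' => DV t' x (mix s μ ν) y) (Icc 0 T) r ∂ρ'

noncomputable def Dfun (DV : ℝ → EuclideanSpace ℝ (Fin n) → Measure (EuclideanSpace ℝ (Fin n)) →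
      EuclideanSpace ℝ (Fin n) → ℝ) (T : ℝ) (x : EuclideanSpace ℝ (Fin n))
    (μ ν : Measure (EuclideanSpace ℝ (Fin n))) (r s : ℝ) : ℝ :=
  Gfun DV T x μ ν ν r s - Gfun DV T x μ ν μ r s

noncomputable def Qfun (DV : ℝ → EuclideanSpace ℝ (Fin n) → Measure (EuclideanSpace ℝ (Fin n)) →
      EuclideanSpace ℝ (Fin n) → ℝ) (T : ℝ) (x : EuclideanSpace ℝ (Fin n))
    (μ ν : Measure (EuclideanSpace ℝ (Fin n))) (r : ℝ) : ℝ :=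
  ∫ s in Ioc (0:ℝ) 1, Dfun DV T x μ ν r s

noncomputable def Pfun (DV : ℝ → EuclideanSpace ℝ (Fin n) → Measure (EuclideanSpace ℝ (Fin n)) →
      EuclideanSpace ℝ (Fin n) → ℝ) (x : EuclideanSpace ℝ (Fin n))
    (μ ν : Measure (EuclideanSpace ℝ (Fin n))) (u s : ℝ) : ℝ :=
  (∫ y, DV u x (mix s μ ν) y ∂ν) - (∫ y, DV u x (mix s μ ν) y ∂μ)


theorem contQ_aux {T Cb : ℝ} {D : ℝ → ℝ → ℝ}
    (contD : ContinuousOn (fun p : ℝ × ℝ => D p.1 p.2) (Icc 0 T ×ˢ Icc 0 1))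
    (hb : ∀ r ∈ Icc (0:ℝ) T, ∀ s ∈ Icc (0:ℝ) 1, |D r s| ≤ Cb) :
    ContinuousOn (fun r => ∫ s in Ioc (0:ℝ) 1, D r s) (Icc (0:ℝ) T) := by
  intro r hr
  apply continuousWithinAt_of_dominated (bound := fun _ => Cb)
  · filter_upwards [eventually_mem_nhdsWithin] with r' hr'
    have hcont' : ContinuousOn (fun s => D r' s) (Icc (0:ℝ) 1) :=
      contD.comp (Continuous.continuousOn (continuous_const.prodMk continuous_id))
        (fun s hs => ⟨hr', hs⟩)
    exact (hcont'.mono Ioc_subset_Icc_self).aestronglyMeasurable measurableSet_Ioc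
  · filter_upwards [eventually_mem_nhdsWithin] with r' hr'
    filter_upwards [ae_restrict_mem measurableSet_Ioc] with s hs
    rw [Real.norm_eq_abs]
    exact hb r' hr' s (Ioc_subset_Icc_self hs)
  · exact integrable_const Cb
  · filter_upwards [ae_restrict_mem measurableSet_Ioc] with s hs
    exact (contD.comp (Continuous.continuousOn (continuous_id.prodMk continuous_const))
      (fun r' hr' => ⟨hr', Ioc_subset_Icc_self hs⟩)) r hr

theorem swap_aux {T Cb : ℝ} {D : ℝ → ℝ → ℝ}
    (contD : ContinuousOn (fun p : ℝ × ℝ => D p.1 p.2) (Icc 0 T ×ˢ Icc 0 1))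
    (hb : ∀ r ∈ Icc (0:ℝ) T, ∀ s ∈ Icc (0:ℝ) 1, |D r s| ≤ Cb)
    {u : ℝ} (hu : u ∈ Icc (0:ℝ) T) :
    (∫ s in (0:ℝ)..1, (∫ r in (0:ℝ)..u, D r s))
      = ∫ r in (0:ℝ)..u, (∫ s in Ioc (0:ℝ) 1, D r s) := by
  haveI hfin1 : IsFiniteMeasure (volume.restrict (Ioc (0:ℝ) 1)) := by
    constructor
    rw [Measure.restrict_apply_univ]
    simp [Real.volume_Ioc]
  haveI hfin2 : IsFiniteMeasure (volume.restrict (Ioc (0:ℝ) u)) := by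
    constructor
    rw [Measure.restrict_apply_univ]
    simp [Real.volume_Ioc]
  have hIntD : Integrable (Function.uncurry fun s r => D r s)
      ((volume.restrict (Ioc (0:ℝ) 1)).prod (volume.restrict (Ioc (0:ℝ) u))) := by
    have hsetm : MeasurableSet (Ioc (0:ℝ) 1 ×ˢ Ioc (0:ℝ) u) :=
      measurableSet_Ioc.prod measurableSet_Ioc
    rw [Measure.prod_restrict]
    haveI : IsFiniteMeasure (((volume : Measure ℝ).prod volume).restrict
        (Ioc (0:ℝ) 1 ×ˢ Ioc (0:ℝ) u)) := by
      rw [← Measure.prod_restrict]; infer_instance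
    have haesm : AEStronglyMeasurable (Function.uncurry fun s r => D r s)
        (((volume : Measure ℝ).prod volume).restrict (Ioc (0:ℝ) 1 ×ˢ Ioc (0:ℝ) u)) := by
      apply ContinuousOn.aestronglyMeasurable _ hsetm
      apply ContinuousOn.mono (s := Icc (0:ℝ) 1 ×ˢ Icc (0:ℝ) T)
      · exact contD.comp (Continuous.continuousOn continuous_swap)
          (fun p hp => ⟨hp.2, hp.1⟩)
      · intro p hp
        exact ⟨Ioc_subset_Icc_self hp.1,
          Icc_subset_Icc le_rfl hu.2 (Ioc_subset_Icc_self hp.2)⟩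
    refine Integrable.mono' (integrable_const Cb) haesm ?_
    filter_upwards [ae_restrict_mem hsetm] with p hp
    rw [Real.norm_eq_abs]
    exact hb p.2 (Icc_subset_Icc le_rfl hu.2 (Ioc_subset_Icc_self hp.2)) p.1
      (Ioc_subset_Icc_self hp.1)
  calc (∫ s in (0:ℝ)..1, (∫ r in (0:ℝ)..u, D r s))
      = ∫ s in Ioc (0:ℝ) 1, (∫ r in Ioc (0:ℝ) u, D r s) := by
        rw [intervalIntegral.integral_of_le zero_le_one]
        apply setIntegral_congr_fun measurableSet_Ioc
        intro s _
        show (∫ r in (0:ℝ)..u, D r s) = _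
        rw [intervalIntegral.integral_of_le hu.1]
    _ = ∫ r in Ioc (0:ℝ) u, (∫ s in Ioc (0:ℝ) 1, D r s) :=
        MeasureTheory.integral_integral_swap hIntD
    _ = ∫ r in (0:ℝ)..u, (∫ s in Ioc (0:ℝ) 1, D r s) :=
        (intervalIntegral.integral_of_le hu.1).symm



/-- exchange of `∂_t` and `δ_μ`: let
`V̂ : [0,T] × ℝⁿ × P₂(ℝⁿ) → ℝ` be such that `∂_t V̂`, `δ_μ V̂` and `∂_t δ_μ V̂`
exist and are jointly continuous, with `|δ_μ V̂|, |∂_t δ_μ V̂| ≤ C_K(1+|y|²)`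
whenever `|x| ≤ K` and `W₂(μ, δ₀) ≤ K`.  Then the flat derivative in `μ` of
`(t,x,μ) ↦ ∂_t V̂(t,x,μ)` exists and equals `∂_t δ_μ V̂(t,x,μ;y)`; here
existence means that `∂_t δ_μ V̂` satisfies the flat-derivative
characterization (integral formula and normalization) for `∂_t V̂`.
Time derivatives are one-sided at `t = 0, T` (`derivWithin` on `[0,T]`). -/
theorem flat_deriv_time_exchange (T : ℝ) (hT : 0 < T)
    (V : ℝ → EuclideanSpace ℝ (Fin n) → Measure (EuclideanSpace ℝ (Fin n)) → ℝ)
    (DV : ℝ → EuclideanSpace ℝ (Fin n) → Measure (EuclideanSpace ℝ (Fin n)) →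
      EuclideanSpace ℝ (Fin n) → ℝ)
    -- DV is the flat derivative of V in μ, with normalization
    (hflat : ∀ t ∈ Icc (0 : ℝ) T, ∀ x, ∀ μ ν, MemP2 μ → MemP2 ν →
      V t x ν - V t x μ = ∫ s in (0 : ℝ)..1,
        ((∫ y, DV t x (mix s μ ν) y ∂ν) - (∫ y, DV t x (mix s μ ν) y ∂μ)))
    (hnorm : ∀ t ∈ Icc (0 : ℝ) T, ∀ x, ∀ μ, MemP2 μ → (∫ y, DV t x μ y ∂μ) = 0)
    -- existence of ∂_t V and ∂_t δ_μ V on [0,T]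
    (hdtV : ∀ t ∈ Icc (0 : ℝ) T, ∀ x, ∀ μ, MemP2 μ →
      DifferentiableWithinAt ℝ (fun t' => V t' x μ) (Icc 0 T) t)
    (hdtDV : ∀ t ∈ Icc (0 : ℝ) T, ∀ x, ∀ μ, MemP2 μ → ∀ y,
      DifferentiableWithinAt ℝ (fun t' => DV t' x μ y) (Icc 0 T) t)
    -- joint continuity of ∂_t V (W₂ metric in the measure argument)
    (hcontdtV : ∀ t ∈ Icc (0 : ℝ) T, ∀ x, ∀ μ, MemP2 μ → ∀ ε > (0 : ℝ),
      ∃ δ > (0 : ℝ), ∀ t' ∈ Icc (0 : ℝ) T, ∀ x', ∀ ν, MemP2 ν →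
        |t' - t| < δ → dist x x' < δ → W2 μ ν < ENNReal.ofReal δ →
        |derivWithin (fun s => V s x' ν) (Icc 0 T) t'
          - derivWithin (fun s => V s x μ) (Icc 0 T) t| < ε)
    -- joint continuity of δ_μ V
    (hcontDV : ∀ t ∈ Icc (0 : ℝ) T, ∀ x, ∀ μ, MemP2 μ → ∀ y, ∀ ε > (0 : ℝ),
      ∃ δ > (0 : ℝ), ∀ t' ∈ Icc (0 : ℝ) T, ∀ x', ∀ ν, MemP2 ν → ∀ y',
        |t' - t| < δ → dist x x' < δ → W2 μ ν < ENNReal.ofReal δ →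
          dist y y' < δ →
        |DV t' x' ν y' - DV t x μ y| < ε)
    -- joint continuity of ∂_t δ_μ V
    (hcontdtDV : ∀ t ∈ Icc (0 : ℝ) T, ∀ x, ∀ μ, MemP2 μ → ∀ y, ∀ ε > (0 : ℝ),
      ∃ δ > (0 : ℝ), ∀ t' ∈ Icc (0 : ℝ) T, ∀ x', ∀ ν, MemP2 ν → ∀ y',
        |t' - t| < δ → dist x x' < δ → W2 μ ν < ENNReal.ofReal δ →
          dist y y' < δ →
        |derivWithin (fun s => DV s x' ν y') (Icc 0 T) t'
          - derivWithin (fun s => DV s x μ y) (Icc 0 T) t| < ε)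
    -- quadratic growth bounds
    (hgrowth : ∀ K > (0 : ℝ), ∃ C_K : ℝ, ∀ t ∈ Icc (0 : ℝ) T, ∀ x, ∀ μ,
      MemP2 μ → ‖x‖ ≤ K → W2 μ (Measure.dirac 0) ≤ ENNReal.ofReal K → ∀ y,
        |DV t x μ y| ≤ C_K * (1 + ‖y‖ ^ 2)
        ∧ |derivWithin (fun s => DV s x μ y) (Icc (0 : ℝ) T) t|
            ≤ C_K * (1 + ‖y‖ ^ 2)) :
    -- conclusion: δ_μ(∂_t V)(t,x,μ;y) exists and equals ∂_t δ_μ V(t,x,μ;y)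
    ∀ t ∈ Icc (0 : ℝ) T, ∀ x, ∀ μ ν, MemP2 μ → MemP2 ν →
      (derivWithin (fun s => V s x ν) (Icc (0 : ℝ) T) t
          - derivWithin (fun s => V s x μ) (Icc (0 : ℝ) T) t
        = ∫ s in (0 : ℝ)..1,
            ((∫ y, derivWithin (fun t' => DV t' x (mix s μ ν) y) (Icc (0 : ℝ) T) t ∂ν)
              - (∫ y, derivWithin (fun t' => DV t' x (mix s μ ν) y) (Icc (0 : ℝ) T) t ∂μ)))
      ∧ (∫ y, derivWithin (fun t' => DV t' x μ y) (Icc (0 : ℝ) T) t ∂μ) = 0 := by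
  intro t ht x μ ν hμ hν
  haveI := hμ.1
  haveI := hν.1
  have hintμ : Integrable (fun y : EuclideanSpace ℝ (Fin n) => 1 + ‖y‖ ^ 2) μ :=
    memP2_integrable hμ
  have hintν : Integrable (fun y : EuclideanSpace ℝ (Fin n) => 1 + ‖y‖ ^ 2) ν :=
    memP2_integrable hν
  have h01 : (0:ℝ) ∈ Icc (0:ℝ) 1 := ⟨le_rfl, zero_le_one⟩
  have h11 : (1:ℝ) ∈ Icc (0:ℝ) 1 := ⟨zero_le_one, le_rfl⟩
  have h0T : (0:ℝ) ∈ Icc (0:ℝ) T := ⟨le_rfl, hT.le⟩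
  -- choose growth constant
  obtain ⟨c2, hc2def⟩ : ∃ c2 : ℝ≥0∞, c2 = sm μ + sm ν := ⟨_, rfl⟩
  have hc2 : c2 ≠ ⊤ := by rw [hc2def]; exact ENNReal.add_ne_top.2 ⟨hμ.2.ne, hν.2.ne⟩
  obtain ⟨K, hKdef⟩ : ∃ K : ℝ, K = max ‖x‖ (c2.toReal ^ (1/2 : ℝ)) + 1 := ⟨_, rfl⟩
  have hK : 0 < K := by
    have := le_trans (norm_nonneg x) (le_max_left ‖x‖ (c2.toReal ^ (1/2 : ℝ)))
    rw [hKdef]; linarith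
  have hxK : ‖x‖ ≤ K := by
    have := le_max_left ‖x‖ (c2.toReal ^ (1/2 : ℝ)); rw [hKdef]; linarith
  have hWK : ∀ s ∈ Icc (0:ℝ) 1, W2 (mix s μ ν) (Measure.dirac 0) ≤ ENNReal.ofReal K := by
    intro s hs
    rw [hKdef]
    refine le_trans (W2_mix_dirac_le hμ hν hs) ?_
    have h1 : (sm μ + sm ν) ^ (1/2 : ℝ) = ENNReal.ofReal (c2.toReal ^ (1/2 : ℝ)) := by
      rw [← ENNReal.ofReal_rpow_of_nonneg ENNReal.toReal_nonneg (by norm_num),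
        ENNReal.ofReal_toReal hc2, hc2def]
    rw [h1]
    apply ENNReal.ofReal_le_ofReal
    have := le_max_right ‖x‖ (c2.toReal ^ (1/2 : ℝ)); linarith
  obtain ⟨C, hC⟩ := hgrowth K hK
  -- specialized bounds
  have hCmix : ∀ s ∈ Icc (0:ℝ) 1, ∀ r ∈ Icc (0:ℝ) T, ∀ y,
      |DV r x (mix s μ ν) y| ≤ C * (1 + ‖y‖ ^ 2)
      ∧ |derivWithin (fun u => DV u x (mix s μ ν) y) (Icc (0:ℝ) T) r| ≤ C * (1 + ‖y‖ ^ 2) :=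
    fun s hs r hr y => hC r hr x (mix s μ ν) (mix_memP2 hμ hν hs) hxK (hWK s hs) y
  have hCμ : ∀ r ∈ Icc (0:ℝ) T, ∀ y,
      |DV r x μ y| ≤ C * (1 + ‖y‖ ^ 2)
      ∧ |derivWithin (fun u => DV u x μ y) (Icc (0:ℝ) T) r| ≤ C * (1 + ‖y‖ ^ 2) := by
    have := hCmix 0 h01
    simpa [mix_zero] using this
  have hCν : ∀ r ∈ Icc (0:ℝ) T, ∀ y,
      |DV r x ν y| ≤ C * (1 + ‖y‖ ^ 2)
      ∧ |derivWithin (fun u => DV u x ν y) (Icc (0:ℝ) T) r| ≤ C * (1 + ‖y‖ ^ 2) := by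
    have := hCmix 1 h11
    simpa [mix_one] using this
  -- PART 2
  have part2 : (∫ y, derivWithin (fun t' => DV t' x μ y) (Icc (0 : ℝ) T) t ∂μ) = 0 := by
    have hkeyμ : ∀ u ∈ Icc (0:ℝ) T,
        (∫ y, DV u x μ y ∂μ) - (∫ y, DV 0 x μ y ∂μ)
          = ∫ r in (0:ℝ)..u, (∫ y, derivWithin (fun t' => DV t' x μ y) (Icc (0:ℝ) T) r ∂μ) :=
      fun u hu => key hT (fun u y => DV u x μ y) μ hintμ
        (contA (F := fun t x ρ y => DV t x ρ y) hcontDV x hμ)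
        (contA (F := fun t x ρ y => derivWithin (fun u => DV u x ρ y) (Icc (0:ℝ) T) t)
          hcontdtDV x hμ)
        (fun r hr y => hdtDV r hr x μ hμ y) hCμ hu
    have hGmcont : ContinuousOn
        (fun r => ∫ y, derivWithin (fun t' => DV t' x μ y) (Icc (0:ℝ) T) r ∂μ)
        (Icc (0:ℝ) T) :=
      contG hT (fun r y => derivWithin (fun t' => DV t' x μ y) (Icc (0:ℝ) T) r) μ hintμ
        (contA (F := fun t x ρ y => derivWithin (fun u => DV u x ρ y) (Icc (0:ℝ) T) t)
          hcontdtDV x hμ)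
        (fun r hr y => (hCμ r hr y).2)
    have hH := ftc_Icc hT hGmcont ht
    have hzero : ∀ u ∈ Icc (0:ℝ) T,
        (0:ℝ) = ∫ r in (0:ℝ)..u,
          (∫ y, derivWithin (fun t' => DV t' x μ y) (Icc (0:ℝ) T) r ∂μ) := by
      intro u hu
      rw [← hkeyμ u hu, hnorm u hu x μ hμ, hnorm 0 h0T x μ hμ, sub_zero]
    have hconst : HasDerivWithinAt (fun _ : ℝ => (0:ℝ))
        ((fun r => ∫ y, derivWithin (fun t' => DV t' x μ y) (Icc (0:ℝ) T) r ∂μ) t)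
        (Icc (0:ℝ) T) t :=
      hH.congr (fun u hu => hzero u hu) (hzero t ht)
    have := hconst.derivWithin ((uniqueDiffOn_Icc hT) t ht)
    rw [show derivWithin (fun _ : ℝ => (0:ℝ)) (Icc (0:ℝ) T) t = 0 from by simp] at this
    exact this.symm
  refine ⟨?_, part2⟩
  -- PART 1
  -- joint continuity of D
  have contD : ContinuousOn (fun p : ℝ × ℝ => Dfun DV T x μ ν p.1 p.2)
      (Icc 0 T ×ˢ Icc 0 1) := by
    apply ContinuousOn.sub
    · exact contJoint (F := fun t x ρ y => derivWithin (fun u => DV u x ρ y) (Icc (0:ℝ) T) t)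
        hcontdtDV hμ hν x (fun r hr s hs y => (hCmix s hs r hr y).2) ν hintν
    · exact contJoint (F := fun t x ρ y => derivWithin (fun u => DV u x ρ y) (Icc (0:ℝ) T) t)
        hcontdtDV hμ hν x (fun r hr s hs y => (hCmix s hs r hr y).2) μ hintμ
  have contP : ContinuousOn (fun p : ℝ × ℝ => Pfun DV x μ ν p.1 p.2)
      (Icc 0 T ×ˢ Icc 0 1) := by
    apply ContinuousOn.sub
    · exact contJoint (F := fun t x ρ y => DV t x ρ y)
        hcontDV hμ hν x (fun r hr s hs y => (hCmix s hs r hr y).1) ν hintν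
    · exact contJoint (F := fun t x ρ y => DV t x ρ y)
        hcontDV hμ hν x (fun r hr s hs y => (hCmix s hs r hr y).1) μ hintμ
  -- uniform bound for D
  obtain ⟨Cb, hCbdef⟩ : ∃ Cb : ℝ, Cb = (∫ y, C * (1 + ‖y‖ ^ 2) ∂ν) + ∫ y, C * (1 + ‖y‖ ^ 2) ∂μ :=
    ⟨_, rfl⟩
  have hDbound : ∀ r ∈ Icc (0:ℝ) T, ∀ s ∈ Icc (0:ℝ) 1, |Dfun DV T x μ ν r s| ≤ Cb := by
    intro r hr s hs
    have hbν : |Gfun DV T x μ ν ν r s| ≤ ∫ y, C * (1 + ‖y‖ ^ 2) ∂ν := by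
      rw [Gfun, ← Real.norm_eq_abs]
      exact norm_integral_le_of_norm_le (hintν.const_mul C)
        (Filter.Eventually.of_forall fun y => by
          simpa [Real.norm_eq_abs] using (hCmix s hs r hr y).2)
    have hbμ : |Gfun DV T x μ ν μ r s| ≤ ∫ y, C * (1 + ‖y‖ ^ 2) ∂μ := by
      rw [Gfun, ← Real.norm_eq_abs]
      exact norm_integral_le_of_norm_le (hintμ.const_mul C)
        (Filter.Eventually.of_forall fun y => by
          simpa [Real.norm_eq_abs] using (hCmix s hs r hr y).2)
    rw [Dfun, hCbdef]
    calc |Gfun DV T x μ ν ν r s - Gfun DV T x μ ν μ r s|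
        ≤ |Gfun DV T x μ ν ν r s| + |Gfun DV T x μ ν μ r s| := abs_sub _ _
      _ ≤ _ := add_le_add hbν hbμ
  -- continuity of Q
  have contQ : ContinuousOn (fun r => Qfun DV T x μ ν r) (Icc (0:ℝ) T) :=
    contQ_aux contD hDbound
  -- FTC pointwise in s
  have hPftc : ∀ u ∈ Icc (0:ℝ) T, ∀ s ∈ Icc (0:ℝ) 1,
      Pfun DV x μ ν u s - Pfun DV x μ ν 0 s = ∫ r in (0:ℝ)..u, Dfun DV T x μ ν r s := by
    intro u hu s hs
    have hmem := mix_memP2 hμ hν hs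
    have hkν : (∫ y, DV u x (mix s μ ν) y ∂ν) - (∫ y, DV 0 x (mix s μ ν) y ∂ν)
        = ∫ r in (0:ℝ)..u, Gfun DV T x μ ν ν r s :=
      key hT (fun u y => DV u x (mix s μ ν) y) ν hintν
        (contA (F := fun t x ρ y => DV t x ρ y) hcontDV x hmem)
        (contA (F := fun t x ρ y => derivWithin (fun u => DV u x ρ y) (Icc (0:ℝ) T) t)
          hcontdtDV x hmem)
        (fun r hr y => hdtDV r hr x (mix s μ ν) hmem y) (hCmix s hs) hu
    have hkμ : (∫ y, DV u x (mix s μ ν) y ∂μ) - (∫ y, DV 0 x (mix s μ ν) y ∂μ)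
        = ∫ r in (0:ℝ)..u, Gfun DV T x μ ν μ r s :=
      key hT (fun u y => DV u x (mix s μ ν) y) μ hintμ
        (contA (F := fun t x ρ y => DV t x ρ y) hcontDV x hmem)
        (contA (F := fun t x ρ y => derivWithin (fun u => DV u x ρ y) (Icc (0:ℝ) T) t)
          hcontdtDV x hmem)
        (fun r hr y => hdtDV r hr x (mix s μ ν) hmem y) (hCmix s hs) hu
    have hIν : IntervalIntegrable (fun r => Gfun DV T x μ ν ν r s) volume 0 u := by
      have hGcont : ContinuousOn (fun r => Gfun DV T x μ ν ν r s) (Icc (0:ℝ) T) :=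
        contG hT (fun r y => derivWithin (fun t' => DV t' x (mix s μ ν) y) (Icc (0:ℝ) T) r)
          ν hintν
          (contA (F := fun t x ρ y => derivWithin (fun u => DV u x ρ y) (Icc (0:ℝ) T) t)
            hcontdtDV x hmem)
          (fun r hr y => (hCmix s hs r hr y).2)
      apply ContinuousOn.intervalIntegrable
      exact hGcont.mono (by rw [uIcc_of_le hu.1]; exact Icc_subset_Icc le_rfl hu.2)
    have hIμ : IntervalIntegrable (fun r => Gfun DV T x μ ν μ r s) volume 0 u := by
      have hGcont : ContinuousOn (fun r => Gfun DV T x μ ν μ r s) (Icc (0:ℝ) T) :=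
        contG hT (fun r y => derivWithin (fun t' => DV t' x (mix s μ ν) y) (Icc (0:ℝ) T) r)
          μ hintμ
          (contA (F := fun t x ρ y => derivWithin (fun u => DV u x ρ y) (Icc (0:ℝ) T) t)
            hcontdtDV x hmem)
          (fun r hr y => (hCmix s hs r hr y).2)
      apply ContinuousOn.intervalIntegrable
      exact hGcont.mono (by rw [uIcc_of_le hu.1]; exact Icc_subset_Icc le_rfl hu.2)
    calc Pfun DV x μ ν u s - Pfun DV x μ ν 0 s
        = ((∫ y, DV u x (mix s μ ν) y ∂ν) - (∫ y, DV 0 x (mix s μ ν) y ∂ν))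
          - ((∫ y, DV u x (mix s μ ν) y ∂μ) - (∫ y, DV 0 x (mix s μ ν) y ∂μ)) := by
          rw [Pfun, Pfun]; ring
      _ = (∫ r in (0:ℝ)..u, Gfun DV T x μ ν ν r s) - ∫ r in (0:ℝ)..u, Gfun DV T x μ ν μ r s := by
          rw [hkν, hkμ]
      _ = ∫ r in (0:ℝ)..u, (Gfun DV T x μ ν ν r s - Gfun DV T x μ ν μ r s) :=
          (intervalIntegral.integral_sub hIν hIμ).symm
      _ = ∫ r in (0:ℝ)..u, Dfun DV T x μ ν r s := rfl
  -- integrability in s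
  have hPint : ∀ u ∈ Icc (0:ℝ) T, IntervalIntegrable (fun s => Pfun DV x μ ν u s) volume 0 1 := by
    intro u hu
    apply ContinuousOn.intervalIntegrable
    rw [uIcc_of_le zero_le_one]
    exact contP.comp (Continuous.continuousOn (continuous_const.prodMk continuous_id))
      (fun s hs => ⟨hu, hs⟩)
  -- Fubini
  have hswap : ∀ u ∈ Icc (0:ℝ) T,
      (∫ s in (0:ℝ)..1, (∫ r in (0:ℝ)..u, Dfun DV T x μ ν r s))
        = ∫ r in (0:ℝ)..u, Qfun DV T x μ ν r :=
    fun u hu => swap_aux contD hDbound hu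
  -- assemble
  have hEq : ∀ u ∈ Icc (0:ℝ) T, V u x ν - V u x μ
      = (∫ s in (0:ℝ)..1, Pfun DV x μ ν 0 s) + ∫ r in (0:ℝ)..u, Qfun DV T x μ ν r := by
    intro u hu
    have h1 : V u x ν - V u x μ = ∫ s in (0:ℝ)..1, Pfun DV x μ ν u s :=
      hflat u hu x μ ν hμ hν
    rw [h1, ← hswap u hu]
    have h2 : (∫ s in (0:ℝ)..1, (∫ r in (0:ℝ)..u, Dfun DV T x μ ν r s))
        = ∫ s in (0:ℝ)..1, (Pfun DV x μ ν u s - Pfun DV x μ ν 0 s) := by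
      apply intervalIntegral.integral_congr
      intro s hs
      rw [uIcc_of_le zero_le_one] at hs
      exact (hPftc u hu s hs).symm
    rw [h2, intervalIntegral.integral_sub (hPint u hu) (hPint 0 h0T)]
    ring
  have hH : HasDerivWithinAt
      (fun u => (∫ s in (0:ℝ)..1, Pfun DV x μ ν 0 s) + ∫ r in (0:ℝ)..u, Qfun DV T x μ ν r)
      (Qfun DV T x μ ν t) (Icc (0:ℝ) T) t :=
    (ftc_Icc hT contQ ht).const_add _
  have hΨ : HasDerivWithinAt (fun u => V u x ν - V u x μ)
      (Qfun DV T x μ ν t) (Icc (0:ℝ) T) t :=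
    hH.congr (fun u hu => hEq u hu) (hEq t ht)
  have hderivΨ : derivWithin (fun u => V u x ν - V u x μ) (Icc (0:ℝ) T) t
      = Qfun DV T x μ ν t := hΨ.derivWithin ((uniqueDiffOn_Icc hT) t ht)
  have hsplit : derivWithin (fun u => V u x ν - V u x μ) (Icc (0:ℝ) T) t
      = derivWithin (fun u => V u x ν) (Icc (0:ℝ) T) t
        - derivWithin (fun u => V u x μ) (Icc (0:ℝ) T) t :=
    derivWithin_sub (hdtV t ht x ν hν) (hdtV t ht x μ hμ)
  rw [← hsplit, hderivΨ]
  rw [show Qfun DV T x μ ν t = ∫ s in Ioc (0:ℝ) 1, Dfun DV T x μ ν t s from rfl,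
    ← intervalIntegral.integral_of_le zero_le_one]
  apply intervalIntegral.integral_congr
  intro s _
  rfl
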